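/- Let R be a commutative ring with unity and I an ideal of R, and let P = {(a, b) ∈ R × R : a − b ∈ I} be the fiber product ring with the two projections p₁, p₂ : P → R. Then the square of topological spaces obtained by applying Spec, with Spec(R/I) mapping to two copies of Spec(R) via the quotient map R → R/I and the two copies of Spec(R) mapping to Spec(P) via p₁ and p₂, is a pushout square in the category of topological spaces; that is, the canonical continuous map from the topological pushout Spec(R) ⊔_{Spec(R/I)} Spec(R) to Spec(P) is a homeomorphism. -/

import Mathlib

/-- The ring of splines of the two-vertex graph with one edge labeled `I`:
the fiber product `{(a, b) ∈ R × R : a - b ∈ I}`, as a subring of `R × R`. -/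
def pairSubring (R : Type*) [CommRing R] (I : Ideal R) : Subring (R × R) where
  carrier := {p | p.1 - p.2 ∈ I}
  zero_mem' := by simp
  one_mem' := by simp
  add_mem' := by
    intro a b ha hb
    have key : (a + b).1 - (a + b).2 = (a.1 - a.2) + (b.1 - b.2) := by
      simp only [Prod.fst_add, Prod.snd_add]; ring
    show (a + b).1 - (a + b).2 ∈ I
    rw [key]; exact add_mem ha hb
  neg_mem' := by
    intro a ha
    have key : (-a).1 - (-a).2 = -(a.1 - a.2) := by
      simp only [Prod.fst_neg, Prod.snd_neg]; ring
    show (-a).1 - (-a).2 ∈ I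
    rw [key]; exact neg_mem ha
  mul_mem' := by
    intro a b ha hb
    have key : (a * b).1 - (a * b).2 = a.1 * (b.1 - b.2) + (a.1 - a.2) * b.2 := by
      simp only [Prod.fst_mul, Prod.snd_mul]; ring
    show (a * b).1 - (a * b).2 ∈ I
    rw [key]
    exact add_mem (Ideal.mul_mem_left _ _ hb) (Ideal.mul_mem_right _ _ ha)

/-- First projection `R_G → R`. -/
def pairFst (R : Type*) [CommRing R] (I : Ideal R) : pairSubring R I →+* R :=
  (RingHom.fst R R).comp (pairSubring R I).subtype

/-- Second projection `R_G → R`. -/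
def pairSnd (R : Type*) [CommRing R] (I : Ideal R) : pairSubring R I →+* R :=
  (RingHom.snd R R).comp (pairSubring R I).subtype


section Aux

variable {R : Type*} [CommRing R] (I : Ideal R)

lemma pairFst_surjective : Function.Surjective (pairFst R I) :=
  fun a => ⟨⟨(a, a), show a - a ∈ I by simp⟩, rfl⟩

lemma pairSnd_surjective : Function.Surjective (pairSnd R I) :=
  fun a => ⟨⟨(a, a), show a - a ∈ I by simp⟩, rfl⟩

lemma pair_cover (Q : PrimeSpectrum (pairSubring R I)) :
    (∃ x, PrimeSpectrum.comap (pairFst R I) x = Q) ∨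
    (∃ x, PrimeSpectrum.comap (pairSnd R I) x = Q) := by
  have hker : RingHom.ker (pairFst R I) ≤ Q.asIdeal ∨
      RingHom.ker (pairSnd R I) ≤ Q.asIdeal := by
    by_contra hcon
    push_neg at hcon
    obtain ⟨h1, h2⟩ := hcon
    obtain ⟨z, hz, hzQ⟩ := SetLike.not_le_iff_exists.mp h1
    obtain ⟨w, hw, hwQ⟩ := SetLike.not_le_iff_exists.mp h2
    have hz0 : (z : R × R).1 = 0 := hz
    have hw0 : (w : R × R).2 = 0 := hw
    have : z * w = 0 := by
      apply Subtype.ext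
      apply Prod.ext
      · show ((z : R × R) * w).1 = 0
        simp [hz0]
      · show ((z : R × R) * w).2 = 0
        simp [hw0]
    have := Q.isPrime.mem_or_mem (this ▸ Q.asIdeal.zero_mem)
    tauto
  rcases hker with h | h
  · left
    have := range_comap_of_surjective _ _ (pairFst_surjective I)
    have hmem : Q ∈ Set.range (PrimeSpectrum.comap (pairFst R I)) := by
      rw [this]; exact h
    exact hmem
  · right
    have := range_comap_of_surjective _ _ (pairSnd_surjective I)
    have hmem : Q ∈ Set.range (PrimeSpectrum.comap (pairSnd R I)) := by
      rw [this]; exact h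
    exact hmem

/-- Key well-definedness lemma. -/
lemma pair_overlap {x₁ x₂ : PrimeSpectrum R}
    (h : PrimeSpectrum.comap (pairFst R I) x₁ = PrimeSpectrum.comap (pairSnd R I) x₂) :
    x₁ = x₂ ∧ ∃ q : PrimeSpectrum (R ⧸ I),
      PrimeSpectrum.comap (Ideal.Quotient.mk I) q = x₁ := by
  have hmem : ∀ z : pairSubring R I,
      ((z : R × R).1 ∈ x₁.asIdeal ↔ (z : R × R).2 ∈ x₂.asIdeal) := by
    intro z
    have := congrArg (fun p : PrimeSpectrum (pairSubring R I) => z ∈ p.asIdeal) h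
    simpa [PrimeSpectrum.comap, pairFst, pairSnd] using this
  have hx12 : x₁ = x₂ := by
    ext a
    simpa using hmem ⟨(a, a), show a - a ∈ I by simp⟩
  have hIx : I ≤ x₁.asIdeal := by
    intro a ha
    have := (hmem ⟨(a, 0), show a - 0 ∈ I by simpa using ha⟩).mpr (by simp)
    simpa using this
  refine ⟨hx12, ?_⟩
  have hrange := range_comap_of_surjective _ (Ideal.Quotient.mk I)
    Ideal.Quotient.mk_surjective
  have : x₁ ∈ Set.range (PrimeSpectrum.comap (Ideal.Quotient.mk I)) := by
    rw [hrange, Ideal.mk_ker]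
    exact hIx
  exact this

end Aux

/-- For `P = {(a, b) ∈ R × R : a - b ∈ I}`, applying `Spec`
to the fiber-product square yields a pushout square of topological spaces:
two copies of `Spec(R)` glued along `Spec(R/I)` give `Spec(P)`. Stated via
the universal property: any pair of continuous maps out of the two copies of
`Spec(R)` agreeing on `Spec(R/I)` factors uniquely through `Spec(P)`. -/
theorem spec_pair_is_topological_pushout {R : Type*} [CommRing R] (I : Ideal R)
    (T : Type*) [TopologicalSpace T]
    (f g : C(PrimeSpectrum R, T))
    (hfg : ∀ q : PrimeSpectrum (R ⧸ I),
      f (PrimeSpectrum.comap (Ideal.Quotient.mk I) q)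
        = g (PrimeSpectrum.comap (Ideal.Quotient.mk I) q)) :
    ∃! h : C(PrimeSpectrum (pairSubring R I), T),
      (∀ x : PrimeSpectrum R, h (PrimeSpectrum.comap (pairFst R I) x) = f x) ∧
      (∀ x : PrimeSpectrum R, h (PrimeSpectrum.comap (pairSnd R I) x) = g x) := by
    classical
  set φ₁ := PrimeSpectrum.comap (pairFst R I) with hφ₁
  set φ₂ := PrimeSpectrum.comap (pairSnd R I) with hφ₂
  have inj₁ : Function.Injective φ₁ :=
    PrimeSpectrum.comap_injective_of_surjective _ (pairFst_surjective I)
  have inj₂ : Function.Injective φ₂ :=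
    PrimeSpectrum.comap_injective_of_surjective _ (pairSnd_surjective I)
  have hwd : ∀ x₁ x₂, φ₁ x₁ = φ₂ x₂ → f x₁ = g x₂ := by
    intro x₁ x₂ hx
    obtain ⟨hx12, q, hq⟩ := pair_overlap I hx
    rw [← hq, hfg q, hq, hx12]
  set h0 : PrimeSpectrum (pairSubring R I) → T := fun Q =>
    if hh : ∃ x, φ₁ x = Q then f hh.choose
    else g ((pair_cover I Q).resolve_left hh).choose with hh0
  have hc1 : ∀ x, h0 (φ₁ x) = f x := by
    intro x
    have hh : ∃ x', φ₁ x' = φ₁ x := ⟨x, rfl⟩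
    simp only [hh0, dif_pos hh]
    rw [inj₁ hh.choose_spec]
  have hc2 : ∀ x, h0 (φ₂ x) = g x := by
    intro x
    by_cases hh : ∃ x', φ₁ x' = φ₂ x
    · simp only [hh0, dif_pos hh]
      exact hwd _ _ hh.choose_spec
    · simp only [hh0, dif_neg hh]
      rw [inj₂ ((pair_cover I (φ₂ x)).resolve_left hh).choose_spec]
  have hcont : Continuous h0 := by
    rw [continuous_iff_isClosed]
    intro C hC
    have heq : h0 ⁻¹' C = φ₁ '' (f ⁻¹' C) ∪ φ₂ '' (g ⁻¹' C) := by
      ext Q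
      constructor
      · intro hQ
        rcases pair_cover I Q with ⟨x, rfl⟩ | ⟨x, rfl⟩
        · exact Or.inl ⟨x, by show f x ∈ C; rw [← hc1 x]; exact hQ, rfl⟩
        · exact Or.inr ⟨x, by show g x ∈ C; rw [← hc2 x]; exact hQ, rfl⟩
      · rintro (⟨x, hx, rfl⟩ | ⟨x, hx, rfl⟩)
        · simpa [Set.mem_preimage, hc1 x] using hx
        · simpa [Set.mem_preimage, hc2 x] using hx
    rw [heq]
    exact ((PrimeSpectrum.isClosedEmbedding_comap_of_surjective _ _
        (pairFst_surjective I)).isClosedMap _ (hC.preimage f.continuous)).union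
      ((PrimeSpectrum.isClosedEmbedding_comap_of_surjective _ _
        (pairSnd_surjective I)).isClosedMap _ (hC.preimage g.continuous))
  refine ⟨⟨h0, hcont⟩, ⟨hc1, hc2⟩, ?_⟩
  rintro h' ⟨h1', h2'⟩
  ext Q
  rcases pair_cover I Q with ⟨x, rfl⟩ | ⟨x, rfl⟩
  · rw [h1' x]
    exact (hc1 x).symm
  · rw [h2' x]
    exact (hc2 x).symm
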